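/- Let n ≥ 1 and s ≥ 1 be natural numbers, let R be a symmetric positive definite s×s real matrix, let G be an s×n real matrix, let H = I_n − (1/n)·J_n, and set Σ̂ = (1/n)·G·H·Gᵀ. If Σ̂ is invertible, then Tr( (Σ̂ + n·R)⁻¹ · G·Gᵀ + ((1/n)·Σ̂·R⁻¹·Σ̂ + Σ̂)⁻¹ · G·H·Gᵀ ) = Tr( n · (G·H·Gᵀ + n²·R)⁻¹ · (G·Gᵀ + n²·R) ). -/

import Mathlib

open Matrix

lemma smul_inv_aux {s : ℕ} (c : ℝ) (hc : c ≠ 0) (M : Matrix (Fin s) (Fin s) ℝ)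
    (hM : IsUnit M.det) : (c • M)⁻¹ = c⁻¹ • M⁻¹ := by
  have h := Matrix.inv_smul' M (Units.mk0 c hc) hM
  simpa [Units.smul_def] using h

theorem stmt2 (n s : ℕ) (hn : 1 ≤ n) (hs : 1 ≤ s)
    (R : Matrix (Fin s) (Fin s) ℝ) (hR : R.PosDef)
    (G : Matrix (Fin s) (Fin n) ℝ) :
    let J : Matrix (Fin n) (Fin n) ℝ := Matrix.of fun _ _ => 1
    let H : Matrix (Fin n) (Fin n) ℝ := 1 - (1 / (n : ℝ)) • J
    let SigHat : Matrix (Fin s) (Fin s) ℝ := (1 / (n : ℝ)) • (G * H * Gᵀ)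
    IsUnit SigHat.det →
    Matrix.trace ((SigHat + (n : ℝ) • R)⁻¹ * (G * Gᵀ)
        + ((1 / (n : ℝ)) • (SigHat * R⁻¹ * SigHat) + SigHat)⁻¹ * (G * H * Gᵀ))
      = Matrix.trace ((n : ℝ) •
          ((G * H * Gᵀ + ((n : ℝ) ^ 2) • R)⁻¹ * (G * Gᵀ + ((n : ℝ) ^ 2) • R))) := by
  intro J H SigHat hdet
  have hn0 : (n : ℝ) ≠ 0 := by positivity
  set A : Matrix (Fin s) (Fin s) ℝ := G * H * Gᵀ with hA
  set B : Matrix (Fin s) (Fin s) ℝ := G * Gᵀ with hB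
  -- basic facts about H
  have hJJ : J * J = (n : ℝ) • J := by
    ext i j
    simp [J, Matrix.mul_apply, Matrix.smul_apply]
  have hJt : Jᵀ = J := by ext i j; simp [J]
  have hHt : Hᵀ = H := by
    simp [H, Matrix.transpose_sub, Matrix.transpose_smul, hJt]
  have hHH : H * H = H := by
    simp only [H, sub_mul, mul_sub, one_mul, mul_one, Matrix.smul_mul, Matrix.mul_smul,
      hJJ, smul_smul]
    match_scalars <;> field_simp <;> ring
  -- A is positive semidefinite
  have hApsd : A.PosSemidef := by
    have : A = (G * H) * (G * H)ᴴ := by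
      rw [Matrix.conjTranspose_eq_transpose_of_trivial, Matrix.transpose_mul, hHt,
        ← Matrix.mul_assoc, Matrix.mul_assoc G H H, hHH]
    rw [this]
    exact Matrix.posSemidef_self_mul_conjTranspose _
  -- C := A + n² R is positive definite
  have hn2R : (((n : ℝ) ^ 2) • R).PosDef := by
    refine ⟨?_, fun x hx => ?_⟩
    · show (((n : ℝ) ^ 2) • R)ᴴ = _
      rw [Matrix.conjTranspose_smul, hR.1.eq, star_trivial]
    · have := hR.2 hx
      have hpos : (0:ℝ) < (n : ℝ) ^ 2 := by positivity
      exact (hR.smul hpos).2 hx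
  set C : Matrix (Fin s) (Fin s) ℝ := A + ((n : ℝ) ^ 2) • R with hC
  have hCpd : C.PosDef := Matrix.PosDef.posSemidef_add hApsd hn2R
  have hCdet : IsUnit C.det := hCpd.det_pos.ne'.isUnit
  have hRdet : IsUnit R.det := hR.det_pos.ne'.isUnit
  have hRidet : IsUnit R⁻¹.det := hR.inv.det_pos.ne'.isUnit
  -- A is invertible
  have hSA : SigHat = (1 / (n : ℝ)) • A := rfl
  have hAdet : IsUnit A.det := by
    have : SigHat.det = (1 / (n : ℝ)) ^ (Fintype.card (Fin s)) * A.det := by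
      rw [hSA, Matrix.det_smul]
    rw [this] at hdet
    exact (IsUnit.mul_iff.mp hdet).2
  -- first inverse
  have h1 : SigHat + (n : ℝ) • R = (1 / (n : ℝ)) • C := by
    rw [hC, smul_add, hSA, smul_smul]
    congr 1
    congr 1
    field_simp
  have hinv1 : (SigHat + (n : ℝ) • R)⁻¹ = (n : ℝ) • C⁻¹ := by
    rw [h1, smul_inv_aux _ (by simp [hn0]) _ hCdet]
    congr 1
    simp
  -- second inverse
  have hAR : A * R⁻¹ * (((n : ℝ) ^ 2) • R) = ((n : ℝ) ^ 2) • A := by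
    rw [Matrix.mul_smul, Matrix.mul_assoc, Matrix.nonsing_inv_mul R hRdet, Matrix.mul_one]
  have h2 : (1 / (n : ℝ)) • (SigHat * R⁻¹ * SigHat) + SigHat
      = (1 / (n : ℝ) ^ 3) • (A * R⁻¹ * C) := by
    rw [hC, Matrix.mul_add, hAR, hSA, smul_add]
    simp only [Matrix.smul_mul, Matrix.mul_smul, smul_smul]
    congr 1
    · congr 1
      field_simp
    · congr 1
      field_simp
  have hARdet : IsUnit (A * R⁻¹ * C).det := by
    rw [Matrix.det_mul, Matrix.det_mul]
    exact (hAdet.mul hRidet).mul hCdet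
  have hinv2 : ((1 / (n : ℝ)) • (SigHat * R⁻¹ * SigHat) + SigHat)⁻¹
      = ((n : ℝ) ^ 3) • (C⁻¹ * (R * A⁻¹)) := by
    rw [h2, smul_inv_aux _ (by simp [hn0]) _ hARdet]
    rw [Matrix.mul_inv_rev, Matrix.mul_inv_rev, Matrix.nonsing_inv_nonsing_inv R hRdet]
    congr 1
    simp
  -- put it together
  rw [hinv1, hinv2]
  have hterm2 : (((n : ℝ) ^ 3) • (C⁻¹ * (R * A⁻¹))) * A = ((n : ℝ) ^ 3) • (C⁻¹ * R) := by
    rw [Matrix.smul_mul]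
    congr 1
    rw [Matrix.mul_assoc, Matrix.mul_assoc, Matrix.nonsing_inv_mul A hAdet, Matrix.mul_one]
  rw [hterm2]
  have hrhs : (n : ℝ) • (C⁻¹ * (B + ((n : ℝ) ^ 2) • R))
      = ((n : ℝ) • C⁻¹) * B + ((n : ℝ) ^ 3) • (C⁻¹ * R) := by
    rw [Matrix.mul_add, smul_add, Matrix.smul_mul, Matrix.mul_smul, smul_smul]
    congr 2
    ring
  rw [hrhs]
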